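/- In characteristic 2, with ω = dη an exact symplectic form on a smooth R_0-algebra Z_0, the map Q: T_{Z_0/R_0} → Z_0 defined by Q(θ) = L_θ i_θ η − i_{θ^{[2]}} η satisfies Q(θ_1+θ_2) − Q(θ_1) − Q(θ_2) = i_{θ_1} i_{θ_2} ω and Q(zθ) = z²·Q(θ) for z ∈ Z_0; i.e., Q is a quadratic refinement of the symmetric bilinear form given by ω. -/
import Mathlib


open KaehlerDifferential

/-- The square `θ^{[2]} = θ ∘ θ` of a derivation, which is again a derivation in
characteristic `2` (the second power in the restricted Lie algebra of derivations). -/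
noncomputable def derSq {R A : Type*} [CommRing R] [CommRing A] [Algebra R A]
    (h2 : (2 : A) = 0) (θ : Derivation R A A) : Derivation R A A where
  toLinearMap := θ.toLinearMap ∘ₗ θ.toLinearMap
  map_one_eq_zero' := by simp
  leibniz' := fun a b => by
    have h : (θ : A → A) ((θ : A → A) (a * b)) =
        a * (θ : A → A) ((θ : A → A) b) + b * (θ : A → A) ((θ : A → A) a) +
          2 * ((θ : A → A) a * (θ : A → A) b) := by
      rw [Derivation.leibniz]
      simp only [smul_eq_mul, map_add, Derivation.leibniz]
      ring
    simp only [LinearMap.coe_comp, Function.comp_apply, Derivation.coeFn_coe, smul_eq_mul]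
    rw [h, h2]
    ring

/-- The pairing `i_θ η` of a vector field (derivation) with a `1`-form. -/
noncomputable def pairD {R A : Type*} [CommRing R] [CommRing A] [Algebra R A]
    (θ : Derivation R A A) (η : Ω[A⁄R]) : A :=
  θ.liftKaehlerDifferential η

/-- The `2`-form `ω = dη` evaluated on a pair of vector fields, by Cartan's formula:
`dη(θ₁,θ₂) = θ₁⟨θ₂,η⟩ − θ₂⟨θ₁,η⟩ − ⟨[θ₁,θ₂],η⟩`. -/
noncomputable def dEta {R A : Type*} [CommRing R] [CommRing A] [Algebra R A]
    (η : Ω[A⁄R]) (θ₁ θ₂ : Derivation R A A) : A :=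
  θ₁ (pairD θ₂ η) - θ₂ (pairD θ₁ η) - pairD ⁅θ₁, θ₂⁆ η

/-- The quadratic map `Q(θ) = L_θ i_θ η − i_{θ^{[2]}} η` associated to a primitive `η` of the
symplectic form `ω = dη` in characteristic `2`. -/
noncomputable def Qform {R A : Type*} [CommRing R] [CommRing A] [Algebra R A]
    (h2 : (2 : A) = 0) (η : Ω[A⁄R]) (θ : Derivation R A A) : A :=
  θ (pairD θ η) - pairD (derSq h2 θ) η

lemma derSq_apply {R A : Type*} [CommRing R] [CommRing A] [Algebra R A]
    (h2 : (2 : A) = 0) (θ : Derivation R A A) (a : A) :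
    derSq h2 θ a = θ (θ a) := rfl

lemma pairD_add {R A : Type*} [CommRing R] [CommRing A] [Algebra R A]
    (θ₁ θ₂ : Derivation R A A) (η : Ω[A⁄R]) :
    pairD (θ₁ + θ₂) η = pairD θ₁ η + pairD θ₂ η := by
  unfold pairD
  rw [← KaehlerDifferential.linearMapEquivDerivation_symm_apply, map_add]
  simp [KaehlerDifferential.linearMapEquivDerivation_symm_apply]

lemma pairD_smul {R A : Type*} [CommRing R] [CommRing A] [Algebra R A]
    (z : A) (θ : Derivation R A A) (η : Ω[A⁄R]) :
    pairD (z • θ) η = z * pairD θ η := by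
  unfold pairD
  rw [← KaehlerDifferential.linearMapEquivDerivation_symm_apply, map_smul]
  simp [KaehlerDifferential.linearMapEquivDerivation_symm_apply]

lemma derSq_add {R A : Type*} [CommRing R] [CommRing A] [Algebra R A]
    (h2 : (2 : A) = 0) (θ₁ θ₂ : Derivation R A A) :
    derSq h2 (θ₁ + θ₂) = derSq h2 θ₁ + derSq h2 θ₂ + ⁅θ₁, θ₂⁆ := by
  ext a
  simp only [derSq_apply, Derivation.add_apply, Derivation.commutator_apply, map_add]
  have : (2 : A) * θ₂ (θ₁ a) = 0 := by rw [h2]; ring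
  linear_combination this

lemma derSq_smul {R A : Type*} [CommRing R] [CommRing A] [Algebra R A]
    (h2 : (2 : A) = 0) (z : A) (θ : Derivation R A A) :
    derSq h2 (z • θ) = (z ^ 2) • derSq h2 θ + (z * θ z) • θ := by
  ext a
  simp only [derSq_apply, Derivation.add_apply, Derivation.smul_apply, Derivation.leibniz,
    smul_eq_mul, map_add, map_mul]
  ring


/-- in characteristic `2`, with `ω = dη` an exact symplectic form on a smooth
`R_0`-algebra `Z_0`, the map `Q(θ) = L_θ i_θ η − i_{θ^{[2]}} η` satisfies
`Q(θ₁+θ₂) − Q(θ₁) − Q(θ₂) = i_{θ₁} i_{θ₂} ω` and `Q(zθ) = z²·Q(θ)`; i.e. `Q` is a quadratic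
refinement of the symmetric bilinear form given by `ω`. -/
theorem quadratic_refinement (R A : Type) [CommRing R] [CommRing A] [Algebra R A]
    (h2R : (2 : R) = 0) (h2 : (2 : A) = 0)
    (hsmooth : Algebra.Smooth R A) (η : Ω[A⁄R]) :
    (∀ θ₁ θ₂ : Derivation R A A,
      Qform h2 η (θ₁ + θ₂) - Qform h2 η θ₁ - Qform h2 η θ₂ = dEta η θ₁ θ₂) ∧
    (∀ (z : A) (θ : Derivation R A A), Qform h2 η (z • θ) = z ^ 2 * Qform h2 η θ) := by
  constructor
  · intro θ₁ θ₂
    simp only [Qform, dEta, pairD_add, derSq_add, map_add, Derivation.add_apply]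
    have : (2 : A) * θ₂ (pairD θ₁ η) = 0 := by rw [h2]; ring
    linear_combination this
  · intro z θ
    simp only [Qform, derSq_smul, pairD_smul, pairD_add, map_add, Derivation.smul_apply,
      Derivation.leibniz, smul_eq_mul]
    ring
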